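/- Let V be an infinite-dimensional vector space over a field F of characteristic ≠ 2. Every ideal of the Lie algebra gl(V) is one of: (0), F·Id_V, gl(V); I_α or F·Id_V + I_α for some infinite cardinal α ≤ dim_F V; or a subspace U with [I_{ℵ₀}, gl(V)] ⊆ U ⊆ F·Id_V + I_{ℵ₀}. -/

import Mathlib

open Cardinal

section Helpers

universe uF uV

variable {F : Type uF} {V : Type uV} [Field F] [AddCommGroup V] [Module F V]

/-- Alahmadi–Alsulami: `[x[u,v]y, a] ∈ U` for a Lie ideal `U` and `u v ∈ U`. -/
theorem key_bracket (U : Submodule F (Module.End F V))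
    (hU : ∀ u ∈ U, ∀ a : Module.End F V, u * a - a * u ∈ U)
    {u v : Module.End F V} (hu : u ∈ U) (hv : v ∈ U)
    (x y a : Module.End F V) :
    (x*(u*v - v*u)*y)*a - a*(x*(u*v - v*u)*y) ∈ U := by
  have h1 := hU v hv (y*a*x*u)
  have h2 := hU v hv (u*y*a*x)
  have h3 := hU _ (hU v hv (a*x*y)) u
  have h4 := hU _ (hU v hv (u*y*a)) x
  have h5 := hU _ (hU v hv (a*x*u)) y
  have h6 := hU _ (hU v hv (y*a)) (x*u)
  have h7 := hU _ (hU v hv (a*x)) (u*y)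
  have h8 := hU _ (hU _ (hU v hv (a*x)) y) u
  have h9 := hU u hu (a*x*y*v)
  have h10 := hU u hu (a*x*v*y)
  have h11 := hU u hu (y*a*x*v)
  have h12 := hU u hu (y*a*v*x)
  have key : (x*(u*v - v*u)*y)*a - a*(x*(u*v - v*u)*y) =
      (v*(y*a*x*u) - (y*a*x*u)*v)
      - (v*(u*y*a*x) - (u*y*a*x)*v)
      + ((v*(a*x*y) - (a*x*y)*v)*u - u*(v*(a*x*y) - (a*x*y)*v))
      + ((v*(u*y*a) - (u*y*a)*v)*x - x*(v*(u*y*a) - (u*y*a)*v))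
      + ((v*(a*x*u) - (a*x*u)*v)*y - y*(v*(a*x*u) - (a*x*u)*v))
      - ((v*(y*a) - (y*a)*v)*(x*u) - (x*u)*(v*(y*a) - (y*a)*v))
      - ((v*(a*x) - (a*x)*v)*(u*y) - (u*y)*(v*(a*x) - (a*x)*v))
      - (((v*(a*x) - (a*x)*v)*y - y*(v*(a*x) - (a*x)*v))*u
          - u*((v*(a*x) - (a*x)*v)*y - y*(v*(a*x) - (a*x)*v)))
      - (u*(a*x*y*v) - (a*x*y*v)*u)
      + (u*(a*x*v*y) - (a*x*v*y)*u)
      - (u*(y*a*x*v) - (y*a*x*v)*u)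
      + (u*(y*a*v*x) - (y*a*v*x)*u) := by noncomm_ring
  rw [key]
  exact add_mem (sub_mem (add_mem (sub_mem (sub_mem (sub_mem (sub_mem (add_mem (add_mem
    (add_mem (sub_mem h1 h2) h3) h4) h5) h6) h7) h8) h9) h10) h11) h12

theorem exists_endo_of_li {ι : Type*} {g : ι → V}
    (hg : LinearIndependent F g) (t : ι → V) :
    ∃ a : Module.End F V, ∀ i, a (g i) = t i := by
  classical
  have li : LinearIndepOn F id (Set.range g) := (linearIndepOn_id_range_iff hg.injective).mpr hg
  let B := Module.Basis.extend li
  let val : V → V := fun x => if h : ∃ i, g i = x then t h.choose else 0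
  refine ⟨B.constr F (fun j => val ↑j), fun i => ?_⟩
  have hmem : g i ∈ li.extend (Set.subset_univ _) :=
    li.subset_extend _ ⟨i, rfl⟩
  have hBi : B ⟨g i, hmem⟩ = g i := Module.Basis.extend_apply_self li _
  have : (B.constr F (fun j => val ↑j)) (B ⟨g i, hmem⟩) = val (g i) :=
    B.constr_basis F _ _
  rw [hBi] at this
  rw [this]
  have hex : ∃ j, g j = g i := ⟨i, rfl⟩
  simp only [val, dif_pos hex]
  have := hex.choose_spec
  rw [hg.injective this]

theorem li_le_rank {ι : Type uV} {f : Module.End F V} {g : ι → V}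
    (hg : LinearIndependent F g) (hr : ∀ i, g i ∈ LinearMap.range f) :
    Cardinal.mk ι ≤ LinearMap.rank f := by
  have li' : LinearIndependent F (fun i => (⟨g i, hr i⟩ : LinearMap.range f)) := by
    apply LinearIndependent.of_comp (LinearMap.range f).subtype
    exact hg
  exact li'.cardinal_le_rank

theorem exists_rank_comp (x y : Module.End F V) {α : Cardinal}
    (hx : α ≤ LinearMap.rank x) (hy : α ≤ LinearMap.rank y) :
    ∃ c : Module.End F V, α ≤ LinearMap.rank (x * c * y) := by
  classical
  obtain ⟨sx, hsx, lix⟩ := le_rank_iff_exists_linearIndependent.mp hx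
  obtain ⟨sy, hsy, liy⟩ := le_rank_iff_exists_linearIndependent.mp hy
  have hxy : #sy = #sx := by rw [hsx, hsy]
  obtain ⟨e⟩ := Cardinal.eq.mp hxy
  -- coerce to V
  have liyV : LinearIndependent F (fun w : sy => ((w : LinearMap.range y) : V)) := by
    exact liy.map' (LinearMap.range y).subtype (Submodule.ker_subtype _)
  have lixV : LinearIndependent F (fun b : sx => ((b : LinearMap.range x) : V)) := by
    exact lix.map' (LinearMap.range x).subtype (Submodule.ker_subtype _)
  -- choose preimages
  have hty : ∀ w : sy, ∃ t, y t = ((w : LinearMap.range y) : V) := fun w => (w : LinearMap.range y).2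
  have hsx' : ∀ b : sx, ∃ s, x s = ((b : LinearMap.range x) : V) := fun b => (b : LinearMap.range x).2
  choose ty hty using hty
  choose sxv hsxv using hsx'
  obtain ⟨c, hc⟩ := exists_endo_of_li liyV (fun w => sxv (e w))
  refine ⟨c, ?_⟩
  have hmem : ∀ w : sy, ((e w : LinearMap.range x) : V) ∈ LinearMap.range (x * c * y) := by
    intro w
    exact ⟨ty w, by simp [Module.End.mul_apply, hty w, hc w, hsxv (e w)]⟩
  have lie : LinearIndependent F (fun w : sy => ((e w : LinearMap.range x) : V)) :=
    lixV.comp e e.injective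
  calc α = #sy := hsy.symm
    _ ≤ LinearMap.rank (x * c * y) := by
        have := li_le_rank lie hmem
        simpa using this

theorem exists_notin_of_rank_lt {W : Submodule F V}
    (hW : Module.rank F W < Module.rank F V) : ∃ x : V, x ∉ W := by
  by_contra h
  push_neg at h
  have : W = ⊤ := Submodule.eq_top_iff'.mpr h
  rw [this, rank_top] at hW
  exact lt_irrefl _ hW

theorem rank_sup_span_lt {W : Submodule F V} (x : V) (hV : ℵ₀ ≤ Module.rank F V)
    (hW : Module.rank F W < Module.rank F V) :
    Module.rank F ↥(W ⊔ (Submodule.span F {x})) < Module.rank F V := by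
  refine lt_of_le_of_lt (Submodule.rank_add_le_rank_add_rank _ _) ?_
  have h1 : Module.rank F ↥(Submodule.span F {x}) ≤ 1 := by
    simpa using rank_span_le (R := F) ({x} : Set V)
  calc Module.rank F ↥W + Module.rank F ↥(Submodule.span F {x})
      ≤ Module.rank F ↥W + 1 := add_le_add_right h1 _
    _ < Module.rank F V := by
        refine Cardinal.add_lt_of_lt hV hW (lt_of_lt_of_le one_lt_aleph0 hV)

theorem almost_scalar (hV : ℵ₀ ≤ Module.rank F V) {u : Module.End F V} {W : Submodule F V}
    (hW : Module.rank F W < Module.rank F V)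
    (h : ∀ x : V, x ∉ W → u x ∈ W ⊔ (Submodule.span F {x})) :
    ∃ c : F, ∀ x, u x - c • x ∈ W := by
  classical
  -- scalar for each x ∉ W
  have hc : ∀ x : V, x ∉ W → ∃ c : F, u x - c • x ∈ W := by
    intro x hx
    obtain ⟨w, hw, z, hz, hsum⟩ := Submodule.mem_sup.mp (h x hx)
    obtain ⟨c, hcz⟩ := Submodule.mem_span_singleton.mp hz
    exact ⟨c, by rw [← hsum, ← hcz]; simpa using hw⟩
  -- independence mod W implies equal scalars
  have hkey : ∀ x y : V, x ∉ W → y ∉ W ⊔ (Submodule.span F {x}) →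
      ∀ cx cy : F, u x - cx • x ∈ W → u y - cy • y ∈ W → cx = cy := by
    intro x y hx hy cx cy hcx hcy
    have hyW : y ∉ W := fun hyW => hy (Submodule.mem_sup_left hyW)
    have hxy : x + y ∉ W := by
      intro hmem
      apply hy
      have : y = (x + y) - x := by abel
      rw [this]
      exact Submodule.sub_mem _ (Submodule.mem_sup_left hmem)
        (Submodule.mem_sup_right (Submodule.mem_span_singleton_self x))
    obtain ⟨cz, hcz⟩ := hc (x + y) hxy
    -- (cx - cz) • x + (cy - cz) • y ∈ W
    have hrel : (cx - cz) • x + (cy - cz) • y ∈ W := by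
      have := Submodule.sub_mem _ hcz (Submodule.add_mem _ hcx hcy)
      have heq : (u (x+y) - cz • (x+y)) - ((u x - cx • x) + (u y - cy • y))
          = (cx - cz) • x + (cy - cz) • y := by
        rw [map_add]
        module
      rwa [heq] at this
    by_contra hne
    -- then from the relation: y ∈ W ⊔ span x or contradiction
    rcases eq_or_ne cy cz with h1 | h1
    · -- then (cx - cz) • x ∈ W with cx ≠ cz (since cx ≠ cy = cz)
      rw [h1] at hrel hne
      simp only [sub_self, zero_smul, add_zero] at hrel
      exact hx (by
        have := Submodule.smul_mem W (cx - cz)⁻¹ hrel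
        rwa [smul_smul, inv_mul_cancel₀ (sub_ne_zero.mpr hne), one_smul] at this)
    · apply hy
      have hyval : y = (cy - cz)⁻¹ • ((cx - cz) • x + (cy - cz) • y)
          - ((cy - cz)⁻¹ * (cx - cz)) • x := by
        rw [smul_add, smul_smul, smul_smul,
          inv_mul_cancel₀ (sub_ne_zero.mpr h1), one_smul]
        abel
      rw [hyval]
      refine Submodule.sub_mem _
        (Submodule.mem_sup_left (Submodule.smul_mem _ _ hrel))
        (Submodule.mem_sup_right (Submodule.smul_mem _ _ (Submodule.mem_span_singleton_self x)))
  obtain ⟨x₀, hx₀⟩ := exists_notin_of_rank_lt hW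
  obtain ⟨c, hc₀⟩ := hc x₀ hx₀
  refine ⟨c, fun x => ?_⟩
  by_cases hx : x ∈ W
  · -- x = (x + x₀) - x₀
    have hxx₀ : x + x₀ ∉ W := fun hmem => hx₀ (by simpa using W.sub_mem hmem hx)
    obtain ⟨cx, hcx⟩ := hc (x + x₀) hxx₀
    -- mediator to show cx = c
    obtain ⟨y, hy⟩ := exists_notin_of_rank_lt
      (show Module.rank F ↥((W ⊔ Submodule.span F {x + x₀}) ⊔ Submodule.span F {x₀})
          < Module.rank F V from rank_sup_span_lt _ hV (rank_sup_span_lt _ hV hW))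
    have hy1 : y ∉ (W ⊔ Submodule.span F {x + x₀}) := fun hm => hy (Submodule.mem_sup_left hm)
    have hyW : y ∉ W := fun hm => hy (Submodule.mem_sup_left (Submodule.mem_sup_left hm))
    obtain ⟨cyy, hcy⟩ := hc y hyW
    have hy2 : y ∉ (W ⊔ Submodule.span F {x₀}) := by
      intro hm
      apply hy
      obtain ⟨w, hw, z, hz, rfl⟩ := Submodule.mem_sup.mp hm
      exact Submodule.add_mem _ (Submodule.mem_sup_left (Submodule.mem_sup_left hw))
        (Submodule.mem_sup_right hz)
    have e1 : cx = cyy := hkey (x + x₀) y hxx₀ hy1 _ _ hcx hcy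
    have e2 : c = cyy := hkey x₀ y hx₀ hy2 _ _ hc₀ hcy
    have : u (x + x₀) - c • (x + x₀) ∈ W := by rw [e1.trans e2.symm] at hcx; exact hcx
    have heq : u x - c • x = (u (x + x₀) - c • (x + x₀)) - (u x₀ - c • x₀) := by
      rw [map_add]; module
    rw [heq]
    exact W.sub_mem this hc₀
  · obtain ⟨cx, hcx⟩ := hc x hx
    obtain ⟨y, hy⟩ := exists_notin_of_rank_lt
      (show Module.rank F ↥((W ⊔ Submodule.span F {x}) ⊔ Submodule.span F {x₀})
          < Module.rank F V from rank_sup_span_lt _ hV (rank_sup_span_lt _ hV hW))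
    have hy1 : y ∉ (W ⊔ Submodule.span F {x}) := fun hm => hy (Submodule.mem_sup_left hm)
    have hyW : y ∉ W := fun hm => hy (Submodule.mem_sup_left (Submodule.mem_sup_left hm))
    obtain ⟨cyy, hcy⟩ := hc y hyW
    have hy2 : y ∉ (W ⊔ Submodule.span F {x₀}) := by
      intro hm
      apply hy
      obtain ⟨w, hw, z, hz, rfl⟩ := Submodule.mem_sup.mp hm
      exact Submodule.add_mem _ (Submodule.mem_sup_left (Submodule.mem_sup_left hw))
        (Submodule.mem_sup_right hz)
    have e1 : cx = cyy := hkey x y hx hy1 _ _ hcx hcy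
    have e2 : c = cyy := hkey x₀ y hx₀ hy2 _ _ hc₀ hcy
    rw [show c = cx from e2.trans e1.symm]
    exact hcx

theorem central_is_scalar (hV : ℵ₀ ≤ Module.rank F V) {u : Module.End F V}
    (h : ∀ a : Module.End F V, u * a - a * u = 0) :
    u ∈ Submodule.span F {(1 : Module.End F V)} := by
  have hrb : Module.rank F (⊥ : Submodule F V) < Module.rank F V := by
    rw [rank_bot]
    exact lt_of_lt_of_le aleph0_pos hV
  have hsp : ∀ x : V, x ∉ (⊥ : Submodule F V) → u x ∈ (⊥ : Submodule F V) ⊔ Submodule.span F {x} := by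
    intro x hx
    rw [bot_sup_eq]
    by_contra hux
    have hx0 : x ≠ 0 := by simpa using hx
    have hli : LinearIndependent F ![x, u x] := by
      rw [LinearIndependent.pair_iff]
      intro s t hst
      rcases eq_or_ne t 0 with rfl | ht
      · rw [zero_smul, add_zero, smul_eq_zero] at hst
        rcases hst with h' | h'
        · exact ⟨h', rfl⟩
        · exact absurd h' hx0
      · exfalso
        apply hux
        rw [Submodule.mem_span_singleton]
        refine ⟨-(t⁻¹ * s), ?_⟩
        have h' : t • u x = -(s • x) := by
          rw [add_comm] at hst
          exact add_eq_zero_iff_eq_neg.mp hst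
        calc (-(t⁻¹ * s)) • x = t⁻¹ • -(s • x) := by rw [smul_neg, neg_smul, smul_smul]
          _ = t⁻¹ • (t • u x) := by rw [h']
          _ = u x := inv_smul_smul₀ ht _

    obtain ⟨a, ha⟩ := exists_endo_of_li hli ![0, x]
    have h0 := ha 0
    have h1 := ha 1
    simp only [Matrix.cons_val_zero, Matrix.cons_val_one, Matrix.head_cons] at h0 h1
    have := congrArg (fun f : Module.End F V => f x) (h a)
    simp only [LinearMap.sub_apply, Module.End.mul_apply, LinearMap.zero_apply] at this
    rw [h0, h1, map_zero] at this
    exact hx0 (by rwa [zero_sub, neg_eq_zero] at this) 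
  obtain ⟨c, hc⟩ := almost_scalar hV hrb hsp
  rw [Submodule.mem_span_singleton]
  refine ⟨c, ?_⟩
  ext x
  have := hc x
  simp only [Submodule.mem_bot, sub_eq_zero] at this
  simp [this]

/-- If `u` is not a scalar plus an operator of rank `< α`, there is `a` with
`rank [u,a] ≥ α`. -/
theorem exists_big_bracket (hV : ℵ₀ ≤ Module.rank F V) {α : Cardinal} (hα : ℵ₀ ≤ α)
    (hαV : α ≤ Module.rank F V) {u : Module.End F V}
    (hu : ∀ c : F, ¬ (LinearMap.rank (u - c • 1) < α)) :
    ∃ a : Module.End F V, α ≤ LinearMap.rank (u * a - a * u) := by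
  classical
  set good : Set V → Prop := fun S =>
    (LinearIndependent F (fun z : ↥(S ∪ ⇑u '' S) => (z : V))) ∧ (S ∩ ⇑u '' S = ∅)
      ∧ Set.InjOn ⇑u S with hgood
  obtain ⟨M, hMgood, hMmax⟩ : ∃ M, good M ∧ ∀ S, good S → M ⊆ S → S = M := by
    have hchains : ∀ c ⊆ {S : Set V | good S}, IsChain (· ⊆ ·) c →
        ∃ ub ∈ {S : Set V | good S}, ∀ s ∈ c, s ⊆ ub := by
      intro c hc hchain
      rcases c.eq_empty_or_nonempty with rfl | hne
      · refine ⟨∅, ?_, by simp⟩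
        constructor
        · have : (∅ ∪ ⇑u '' ∅ : Set V) = ∅ := by simp
          rw [this]
          exact linearIndependent_empty_type
        · simp [Set.InjOn]
      · refine ⟨⋃₀ c, ?_, fun s hs => Set.subset_sUnion_of_mem hs⟩
        have hdir : DirectedOn (· ⊆ ·) c := hchain.directedOn
        constructor
        · have hset : (⋃₀ c ∪ ⇑u '' ⋃₀ c) = ⋃₀ ((fun s => s ∪ ⇑u '' s) '' c) := by
            ext z
            simp only [Set.mem_union, Set.mem_sUnion, Set.mem_image, Set.sUnion_image,
              Set.mem_iUnion]
            constructor
            · rintro (⟨s, hs, hz⟩ | ⟨w, ⟨s, hs, hw⟩, rfl⟩)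
              · exact ⟨s, hs, Or.inl hz⟩
              · exact ⟨s, hs, Or.inr ⟨w, hw, rfl⟩⟩
            · rintro ⟨s, hs, (hz | ⟨w, hw, rfl⟩)⟩
              · exact Or.inl ⟨s, hs, hz⟩
              · exact Or.inr ⟨w, ⟨s, hs, hw⟩, rfl⟩
          rw [hset]
          show LinearIndepOn F id _
          apply linearIndepOn_sUnion_of_directed
          · rintro s₁ ⟨t₁, ht₁, rfl⟩ s₂ ⟨t₂, ht₂, rfl⟩
            obtain ⟨t₃, ht₃, h₁, h₂⟩ := hdir t₁ ht₁ t₂ ht₂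
            exact ⟨t₃ ∪ ⇑u '' t₃, ⟨t₃, ht₃, rfl⟩,
              Set.union_subset_union h₁ (Set.image_mono  h₁),
              Set.union_subset_union h₂ (Set.image_mono  h₂)⟩
          · rintro s ⟨t, ht, rfl⟩
            exact (hc ht).1
        constructor
        · apply Set.eq_empty_iff_forall_notMem.mpr
          rintro z ⟨⟨s₁, hs₁, hz₁⟩, w, ⟨s₂, hs₂, hw⟩, rfl⟩
          obtain ⟨s₃, hs₃, h₁, h₂⟩ := hdir s₁ hs₁ s₂ hs₂
          have : u w ∈ s₃ ∩ ⇑u '' s₃ := ⟨h₁ hz₁, w, h₂ hw, rfl⟩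
          rw [(hc hs₃).2.1] at this
          exact this
        · rintro a ⟨s₁, hs₁, ha⟩ b ⟨s₂, hs₂, hb⟩ hab
          obtain ⟨s₃, hs₃, h₁, h₂⟩ := hdir s₁ hs₁ s₂ hs₂
          exact (hc hs₃).2.2 (h₁ ha) (h₂ hb) hab
    obtain ⟨M, hM⟩ := zorn_subset {S : Set V | good S} hchains
    exact ⟨M, hM.prop, fun S hS hsub => Set.Subset.antisymm (hM.2 hS hsub) hsub⟩
  obtain ⟨hli, hdisj, hinj⟩ := hMgood
  by_cases hcard : α ≤ #↥M
  · -- build a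
    have jinj : Function.Injective
        (fun i : ↥M ⊕ ↥M => (Sum.elim (fun m : ↥M => (⟨(m : V), Or.inl m.2⟩ : ↥(M ∪ ⇑u '' M)))
          (fun m : ↥M => ⟨u m, Or.inr ⟨m, m.2, rfl⟩⟩) i)) := by
      rintro (m₁ | m₁) (m₂ | m₂) h <;> simp only [Sum.elim_inl, Sum.elim_inr,
        Subtype.mk.injEq] at h
      · exact congrArg Sum.inl (Subtype.ext (Subtype.mk.inj h))
      · exact absurd (Set.eq_empty_iff_forall_notMem.mp hdisj (m₁ : V)
          ⟨m₁.2, m₂, m₂.2, (Subtype.mk.inj h).symm⟩) (fun hx => hx)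
      · exact absurd (Set.eq_empty_iff_forall_notMem.mp hdisj (m₂ : V)
          ⟨m₂.2, m₁, m₁.2, Subtype.mk.inj h⟩) (fun hx => hx)
      · exact congrArg Sum.inr (Subtype.ext (hinj m₁.2 m₂.2 (Subtype.mk.inj h)))
    have hfam : LinearIndependent F
        (Sum.elim (fun m : ↥M => (m : V)) (fun m : ↥M => u m)) := by
      have := hli.comp _ jinj
      convert this using 1
      funext i
      rcases i with m | m <;> rfl
    obtain ⟨a, ha⟩ := exists_endo_of_li hfam (Sum.elim (fun m => (m : V)) (fun _ => 0))
    refine ⟨a, le_trans hcard ?_⟩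
    have hval : ∀ m : ↥M, (u * a - a * u) (m : V) = u m := by
      intro m
      have h1 := ha (Sum.inl m)
      have h2 := ha (Sum.inr m)
      simp only [Sum.elim_inl, Sum.elim_inr] at h1 h2
      simp [LinearMap.sub_apply, Module.End.mul_apply, h1, h2]
    have hliu : LinearIndependent F (fun m : ↥M => u m) := by
      have := hfam.comp Sum.inr Sum.inr_injective
      exact this
    exact li_le_rank hliu (fun m => ⟨m, hval m⟩)
  · -- maximality gives almost-scalar, contradiction
    exfalso
    push_neg at hcard
    set W : Submodule F V := Submodule.span F (M ∪ ⇑u '' M) with hW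
    have hrankW : Module.rank F W < α := by
      refine lt_of_le_of_lt (rank_span_le _) ?_
      refine lt_of_le_of_lt (mk_union_le _ _) ?_
      exact Cardinal.add_lt_of_lt hα hcard
        (lt_of_le_of_lt Cardinal.mk_image_le hcard)
    have hrankWV : Module.rank F W < Module.rank F V := lt_of_lt_of_le hrankW hαV
    have hsp : ∀ x : V, x ∉ W → u x ∈ W ⊔ Submodule.span F {x} := by
      intro x hx
      by_contra hux
      -- show good (insert x M), contradicting maximality
      have hxW : ∀ y ∈ M ∪ ⇑u '' M, y ∈ W := fun y hy => Submodule.subset_span hy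
      have huxW : u x ∉ W := fun h => hux (Submodule.mem_sup_left h)
      have hxne : x ≠ u x := by
        intro h
        exact hux (Submodule.mem_sup_right (h ▸ Submodule.mem_span_singleton_self x))
      have hgood' : good (insert x M) := by
        refine ⟨?_, ?_, ?_⟩
        · have hset : (insert x M ∪ ⇑u '' insert x M) = insert x (insert (u x) (M ∪ ⇑u '' M)) := by
            rw [Set.image_insert_eq]
            ext z
            simp only [Set.mem_insert_iff, Set.mem_union, Set.mem_image]
            tauto
          rw [hset]
          have hux_notmem : u x ∉ (M ∪ ⇑u '' M) := fun h => huxW (hxW _ h)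
          have hx_notmem : x ∉ insert (u x) (M ∪ ⇑u '' M) := by
            intro h
            rcases h with h | h
            · exact hxne h
            · exact hx (hxW _ h)
          refine (linearIndepOn_id_insert hx_notmem).mpr ?_
          constructor
          · refine (linearIndepOn_id_insert hux_notmem).mpr ?_
            exact ⟨hli, huxW⟩
          · intro hxs
            rw [Set.insert_eq, Submodule.span_union] at hxs
            obtain ⟨z, hz, w, hw, heq⟩ := Submodule.mem_sup.mp hxs
            obtain ⟨cz, hcz⟩ := Submodule.mem_span_singleton.mp hz
            rcases eq_or_ne cz 0 with rfl | hcz0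
            · rw [zero_smul] at hcz
              rw [← hcz, zero_add] at heq
              exact hx (heq ▸ hw)
            · apply hux
              have hxwz : x - w = z := by rw [← heq]; abel
              have huxval : u x = cz⁻¹ • (x - w) := by
                rw [hxwz, ← hcz, smul_smul, inv_mul_cancel₀ hcz0, one_smul]
              rw [huxval]
              refine Submodule.smul_mem _ _ (Submodule.sub_mem _ ?_ (Submodule.mem_sup_left hw))
              exact Submodule.mem_sup_right (Submodule.mem_span_singleton_self _)
        · apply Set.eq_empty_iff_forall_notMem.mpr
          rintro z ⟨hz₁, w, hw, rfl⟩
          rcases hw with rfl | hw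
          · rcases hz₁ with h | h
            · exact hxne h.symm
            · exact huxW (hxW _ (Or.inl h))
          · rcases hz₁ with rfl | hz₁
            · exact hx (hxW _ (Or.inr ⟨w, hw, rfl⟩))
            · exact Set.eq_empty_iff_forall_notMem.mp hdisj _ ⟨hz₁, w, hw, rfl⟩
        · rintro a (rfl | ha) b (rfl | hb) hab
          · rfl
          · exfalso; apply huxW; rw [hab]; exact hxW _ (Or.inr ⟨b, hb, rfl⟩)
          · exfalso; apply huxW; rw [← hab]; exact hxW _ (Or.inr ⟨a, ha, rfl⟩)
          · exact hinj ha hb hab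
      have hMeq := hMmax _ hgood' (Set.subset_insert x M)
      have hxM : x ∈ M := hMeq ▸ Set.mem_insert x M
      exact hx (Submodule.subset_span (Or.inl hxM))
    obtain ⟨c, hc⟩ := almost_scalar hV hrankWV hsp
    apply hu c
    have hrange : LinearMap.range (u - c • 1) ≤ W := by
      rintro z ⟨x, rfl⟩
      have : (u - c • (1 : Module.End F V)) x = u x - c • x := by
        simp [LinearMap.sub_apply]
      rw [this]
      exact hc x
    exact lt_of_le_of_lt (Submodule.rank_mono hrange) hrankW

theorem exists_factor {φ w : Module.End F V} (h : LinearMap.rank φ ≤ LinearMap.rank w) :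
    ∃ b c : Module.End F V, φ = b * w * c := by
  classical
  let Bφ := Module.Basis.ofVectorSpace F ↥(LinearMap.range φ)
  let Bw := Module.Basis.ofVectorSpace F ↥(LinearMap.range w)
  have hcard : #↥(Module.Basis.ofVectorSpaceIndex F ↥(LinearMap.range φ))
      ≤ #↥(Module.Basis.ofVectorSpaceIndex F ↥(LinearMap.range w)) := by
    rw [Module.Basis.mk_eq_rank'' Bφ, Module.Basis.mk_eq_rank'' Bw]
    exact h
  obtain ⟨j⟩ := Cardinal.le_def _ _ |>.mp hcard
  have hxw : ∀ i' : ↥(Module.Basis.ofVectorSpaceIndex F ↥(LinearMap.range w)),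
      ∃ x : V, w x = ↑(Bw i') := fun i' => (Bw i' : LinearMap.range w).2
  choose xw hxw using hxw
  let c : Module.End F V :=
    (Finsupp.linearCombination F (fun i => xw (j i))).comp
      ((Bφ.repr : ↥(LinearMap.range φ) ≃ₗ[F] _).toLinearMap.comp φ.rangeRestrict)
  have hBwli : LinearIndependent F
      (fun i' : ↥(Module.Basis.ofVectorSpaceIndex F ↥(LinearMap.range w)) => ((Bw i' : LinearMap.range w) : V)) :=
    Bw.linearIndependent.map' (LinearMap.range w).subtype (Submodule.ker_subtype _)
  obtain ⟨b, hb⟩ := exists_endo_of_li hBwli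
    (fun i' => if hh : ∃ i, j i = i' then ((Bφ hh.choose : LinearMap.range φ) : V) else 0)
  refine ⟨b, c, ?_⟩
  ext v
  show φ v = b (w (c v))
  have hcv : c v = (Finsupp.linearCombination F (fun i => xw (j i))) (Bφ.repr (φ.rangeRestrict v)) := rfl
  rw [hcv, Finsupp.apply_linearCombination, Finsupp.apply_linearCombination]
  have hcomp : (⇑b ∘ ⇑w ∘ fun i => xw (j i)) = fun i => ((Bφ i : LinearMap.range φ) : V) := by
    funext i
    simp only [Function.comp_apply]
    rw [hxw (j i), hb (j i)]
    have hex : ∃ i₀, j i₀ = j i := ⟨i, rfl⟩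
    rw [dif_pos hex]
    congr 1
    congr 1
    exact j.injective hex.choose_spec
  have : (⇑b ∘ (⇑w ∘ fun i => xw (j i))) = (⇑b ∘ ⇑w ∘ fun i => xw (j i)) := rfl
  rw [this, hcomp]
  have hfin : (Finsupp.linearCombination F (fun i => ((Bφ i : LinearMap.range φ) : V)))
      (Bφ.repr (φ.rangeRestrict v)) = ((LinearMap.range φ).subtype)
        ((Finsupp.linearCombination F ⇑Bφ) (Bφ.repr (φ.rangeRestrict v))) := by
    rw [Finsupp.apply_linearCombination]
    rfl
  rw [hfin, Module.Basis.linearCombination_repr]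
  rfl

theorem exists_between_set {X : Type*} {s t : Set X} (hst : s ⊆ t) {c : Cardinal}
    (hc : ℵ₀ ≤ c) (h1 : #↥s ≤ c) (h2 : c ≤ #↥t) :
    ∃ T : Set X, s ⊆ T ∧ T ⊆ t ∧ #↥T = c := by
  rcases le_or_gt c #↥(t \ s : Set X) with h | h
  · obtain ⟨Y, hYsub, hYcard⟩ := Cardinal.le_mk_iff_exists_subset.mp h
    refine ⟨s ∪ Y, Set.subset_union_left, Set.union_subset hst (hYsub.trans Set.diff_subset), ?_⟩
    refine le_antisymm ?_ ?_
    · refine le_trans (mk_union_le _ _) ?_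
      rw [hYcard]
      calc #↥s + c ≤ c + c := add_le_add_left h1 c
        _ = c := Cardinal.add_eq_self hc
    · rw [← hYcard]
      exact Cardinal.mk_le_mk_of_subset Set.subset_union_right
  · refine ⟨t, hst, le_refl t, le_antisymm ?_ h2⟩
    have : t ⊆ s ∪ (t \ s) := by
      intro x hx
      by_cases hxs : x ∈ s
      · exact Or.inl hxs
      · exact Or.inr ⟨hx, hxs⟩
    calc #↥t ≤ #↥(s ∪ (t \ s) : Set X) := Cardinal.mk_le_mk_of_subset this
      _ ≤ #↥s + #↥(t \ s : Set X) := mk_union_le _ _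
      _ ≤ c + c := add_le_add h1 h.le
      _ = c := Cardinal.add_eq_self hc

/-- Every endomorphism of rank `≤ γ` (γ infinite, `≤ dim V`) is a commutator `[r,ψ]`
with `rank r ≤ γ`. -/
theorem exists_commutator_repr (hV : ℵ₀ ≤ Module.rank F V) {γ : Cardinal} (hγ : ℵ₀ ≤ γ)
    (hγV : γ ≤ Module.rank F V) (φ : Module.End F V) (hφ : LinearMap.rank φ ≤ γ) :
    ∃ r ψ : Module.End F V, LinearMap.rank r ≤ γ ∧ φ = r * ψ - ψ * r := by
  classical
  set Rφ := LinearMap.range φ with hRφ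
  let B₀ := Module.Basis.ofVectorSpace F ↥Rφ
  set s₀ : Set V := Subtype.val '' (Module.Basis.ofVectorSpaceIndex F ↥Rφ) with hs₀
  have hfam : LinearIndependent F (fun i : ↥(Module.Basis.ofVectorSpaceIndex F ↥Rφ) => ((B₀ i : ↥Rφ) : V)) :=
    B₀.linearIndependent.map' Rφ.subtype (Submodule.ker_subtype _)
  have hranfam : Set.range (fun i : ↥(Module.Basis.ofVectorSpaceIndex F ↥Rφ) => ((B₀ i : ↥Rφ) : V)) = s₀ := by
    have hcoe : ∀ i : ↥(Module.Basis.ofVectorSpaceIndex F ↥Rφ), B₀ i = ↑i := fun i => by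
      simp only [B₀, Module.Basis.coe_ofVectorSpace]
    rw [hs₀]
    ext z
    constructor
    · rintro ⟨i, rfl⟩
      exact ⟨↑i, i.2, by show (↑↑i : V) = ↑(B₀ i); rw [hcoe]⟩
    · rintro ⟨zz, hzz, rfl⟩
      exact ⟨⟨zz, hzz⟩, by show (↑(B₀ ⟨zz, hzz⟩) : V) = ↑zz; rw [hcoe]⟩
  have li₀ : LinearIndepOn F id s₀ := by
    have := (linearIndepOn_id_range_iff hfam.injective).mpr hfam
    rwa [hranfam] at this
  set J : Set V := li₀.extend (Set.subset_univ s₀) with hJ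
  set B : Module.Basis ↥J F V := Module.Basis.extend li₀ with hB
  have hs₀J : s₀ ⊆ J := li₀.subset_extend _
  have hBapply : ∀ x : ↥J, B x = ↑x := fun x => Module.Basis.extend_apply_self li₀ x
  have hspan₀ : Rφ ≤ Submodule.span F s₀ := by
    have h1 : Submodule.span F s₀ = Submodule.map Rφ.subtype (Submodule.span F (Module.Basis.ofVectorSpaceIndex F ↥Rφ)) := by
      rw [hs₀, ← Submodule.span_image]; rfl
    have h2 : Submodule.span F (Module.Basis.ofVectorSpaceIndex F ↥Rφ) = ⊤ := by
      have := B₀.span_eq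
      rwa [Module.Basis.coe_ofVectorSpace, Subtype.range_coe] at this
    rw [h1, h2, Submodule.map_subtype_top]
  -- cardinalities
  have hs₀card : #↥s₀ ≤ γ := by
    rw [hs₀, Cardinal.mk_image_eq Subtype.val_injective]
    calc #↥(Module.Basis.ofVectorSpaceIndex F ↥Rφ) = Module.rank F ↥Rφ := (Module.Basis.ofVectorSpace F ↥Rφ).mk_eq_rank''
      _ ≤ γ := hφ
  have hJcard : γ ≤ #↥J := by
    rw [B.mk_eq_rank'']
    exact hγV
  obtain ⟨T, hs₀T, hTJ, hTcard⟩ := exists_between_set hs₀J hγ hs₀card hJcard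
  have hTne : #↥T ≠ 0 := by rw [hTcard]; exact (lt_of_lt_of_le aleph0_pos hγ).ne'
  obtain ⟨q⟩ : Nonempty ((ℕ × ↥T) ≃ ↥T) := by
    rw [← Cardinal.eq, Cardinal.mk_prod, Cardinal.mk_nat, Cardinal.lift_aleph0, Cardinal.lift_id']
    exact Cardinal.mul_eq_right (by rw [hTcard]; exact hγ)
      (by rw [hTcard]; exact hγ) aleph0_ne_zero
  -- the tower vectors
  set E : ℕ → ↥T → V := fun n k => ↑(q (n, k)) with hE
  have hET : ∀ n k, E n k ∈ T := fun n k => (q (n, k)).2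
  -- shift maps
  set sv : ↥J → V := fun x => if hx : ↑x ∈ T then E ((q.symm ⟨↑x, hx⟩).1 + 1) (q.symm ⟨↑x, hx⟩).2 else 0 with hsv
  set rv : ↥J → V := fun x => if hx : ↑x ∈ T then
      (match q.symm ⟨↑x, hx⟩ with
        | (0, _) => (0 : V)
        | (n+1, k) => E n k) else 0 with hrv
  set s : Module.End F V := B.constr F sv with hs
  set r : Module.End F V := B.constr F rv with hr
  have hs_apply : ∀ x : ↥J, s ↑x = sv x := fun x => by
    rw [← hBapply x]; exact B.constr_basis F sv x
  have hr_apply : ∀ x : ↥J, r ↑x = rv x := fun x => by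
    rw [← hBapply x]; exact B.constr_basis F rv x
  have hsE : ∀ n k, s (E n k) = E (n+1) k := by
    intro n k
    have hmem : E n k ∈ J := hTJ (hET n k)
    have := hs_apply ⟨E n k, hmem⟩
    rw [this, hsv]
    simp only [dif_pos (hET n k)]
    have : (⟨E n k, hET n k⟩ : ↥T) = q (n, k) := Subtype.ext rfl
    rw [this, Equiv.symm_apply_apply]
  have hrE0 : ∀ k, r (E 0 k) = 0 := by
    intro k
    have hmem : E 0 k ∈ J := hTJ (hET 0 k)
    rw [hr_apply ⟨E 0 k, hmem⟩, hrv]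
    simp only [dif_pos (hET 0 k)]
    have : (⟨E 0 k, hET 0 k⟩ : ↥T) = q (0, k) := Subtype.ext rfl
    rw [this, Equiv.symm_apply_apply]
  have hrE : ∀ n k, r (E (n+1) k) = E n k := by
    intro n k
    have hmem : E (n+1) k ∈ J := hTJ (hET (n+1) k)
    rw [hr_apply ⟨E (n+1) k, hmem⟩, hrv]
    simp only [dif_pos (hET (n+1) k)]
    have : (⟨E (n+1) k, hET (n+1) k⟩ : ↥T) = q (n+1, k) := Subtype.ext rfl
    rw [this, Equiv.symm_apply_apply]
  -- s maps into span T
  have hsrange : ∀ z : V, s z ∈ Submodule.span F T := by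
    intro z
    have hz : s z ∈ LinearMap.range s := ⟨z, rfl⟩
    rw [hs, Module.Basis.constr_range] at hz
    refine Submodule.span_le.mpr ?_ hz
    rintro w ⟨x, rfl⟩
    rw [hsv]
    by_cases hx : ↑x ∈ T
    · simp only [dif_pos hx]
      exact Submodule.subset_span (hET _ _)
    · simp only [dif_neg hx]
      exact Submodule.zero_mem _
  -- r ∘ s = id on span T
  have hrs : ∀ z ∈ Submodule.span F T, r (s z) = z := by
    intro z hz
    have hker : Submodule.span F T ≤ LinearMap.ker (r * s - 1) := by
      refine Submodule.span_le.mpr ?_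
      intro w hw
      simp only [SetLike.mem_coe, LinearMap.mem_ker, LinearMap.sub_apply, Module.End.mul_apply,
        Module.End.one_apply]
      have hwE : w = E (q.symm ⟨w, hw⟩).1 (q.symm ⟨w, hw⟩).2 := by
        rw [hE]
        show w = ↑(q ((q.symm ⟨w, hw⟩).1, (q.symm ⟨w, hw⟩).2))
        rw [Prod.mk.eta, Equiv.apply_symm_apply]
      rw [hwE, hsE, hrE, sub_self]
    have h3 := LinearMap.mem_ker.mp (hker hz)
    rw [LinearMap.sub_apply, Module.End.mul_apply, Module.End.one_apply] at h3
    exact sub_eq_zero.mp h3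
  have hspanT : Rφ ≤ Submodule.span F T := le_trans hspan₀ (Submodule.span_mono hs₀T)
  -- ψ
  set ψv : ↥J → V := fun x => if hx : ↑x ∈ T then
      ∑ m ∈ Finset.range ((q.symm ⟨↑x, hx⟩).1 + 1),
        (s^(m+1)) (φ (E ((q.symm ⟨↑x, hx⟩).1 - m) (q.symm ⟨↑x, hx⟩).2))
    else s (φ ↑x) with hψv
  set ψ : Module.End F V := B.constr F ψv with hψ
  have hψ_apply : ∀ x : ↥J, ψ ↑x = ψv x := fun x => by
    rw [← hBapply x]; exact B.constr_basis F ψv x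
  have hψE : ∀ n k, ψ (E n k) = ∑ m ∈ Finset.range (n+1), (s^(m+1)) (φ (E (n - m) k)) := by
    intro n k
    have hmem : E n k ∈ J := hTJ (hET n k)
    rw [hψ_apply ⟨E n k, hmem⟩, hψv]
    simp only [dif_pos (hET n k)]
    have heq : (⟨E n k, hET n k⟩ : ↥T) = q (n, k) := Subtype.ext rfl
    rw [heq, Equiv.symm_apply_apply]
  -- rank of r
  have hrankr : LinearMap.rank r ≤ γ := by
    have hrle : LinearMap.range r ≤ Submodule.span F (insert 0 T) := by
      rw [hr, Module.Basis.constr_range]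
      apply Submodule.span_mono
      rintro w ⟨x, rfl⟩
      rw [hrv]
      by_cases hx : ↑x ∈ T
      · simp only [dif_pos hx]
        rcases hp : q.symm ⟨↑x, hx⟩ with ⟨n, k⟩
        cases n with
        | zero => exact Set.mem_insert _ _
        | succ n' => exact Set.mem_insert_of_mem _ (hET n' k)
      · simp only [dif_neg hx]
        exact Set.mem_insert _ _
    calc LinearMap.rank r ≤ Module.rank F ↥(Submodule.span F (insert 0 T)) :=
          Submodule.rank_mono hrle
      _ ≤ #↥(insert 0 T : Set V) := rank_span_le _
      _ ≤ #↥T + 1 := Cardinal.mk_insert_le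
      _ = γ := by rw [hTcard]; exact Cardinal.add_one_eq hγ
  refine ⟨r, ψ, hrankr, ?_⟩
  apply B.ext
  intro x
  rw [hBapply, LinearMap.sub_apply, Module.End.mul_apply, Module.End.mul_apply]
  by_cases hx : ↑x ∈ T
  · -- tower case
    have hxE : (↑x : V) = E (q.symm ⟨↑x, hx⟩).1 (q.symm ⟨↑x, hx⟩).2 := by
      rw [hE]
      show (↑x : V) = ↑(q ((q.symm ⟨↑x, hx⟩).1, (q.symm ⟨↑x, hx⟩).2))
      rw [Prod.mk.eta, Equiv.apply_symm_apply]
    set n := (q.symm ⟨↑x, hx⟩).1 with hn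
    set k := (q.symm ⟨↑x, hx⟩).2 with hk
    rw [hxE]
    have hφmem : ∀ z : V, φ z ∈ Submodule.span F T := fun z => hspanT ⟨z, rfl⟩
    have hterm : ∀ m z, r ((s^(m+1+1)) z) = (s^(m+1)) z := by
      intro m z
      have h1 : (s^(m+1+1)) z = s ((s^(m+1)) z) := by
        rw [pow_succ']
        rfl
      have h2 : (s^(m+1)) z = s ((s^m) z) := by
        rw [pow_succ']
        rfl
      rw [h1, hrs _ (by rw [h2]; exact hsrange _)]
    have hrψ : r (ψ (E n k)) = φ (E n k)
        + ∑ m ∈ Finset.range n, (s^(m+1)) (φ (E (n - (m+1)) k)) := by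
      rw [hψE, map_sum, Finset.sum_range_succ']
      have ht0 : r ((s^(0+1)) (φ (E (n - 0) k))) = φ (E n k) := by
        rw [pow_one, hrs _ (hφmem _), Nat.sub_zero]
      rw [ht0]
      rw [Finset.sum_congr rfl (fun m _ => hterm m (φ (E (n - (m+1)) k)))]
      exact add_comm _ _
    have hψr : ψ (r (E n k)) = ∑ m ∈ Finset.range n, (s^(m+1)) (φ (E (n - (m+1)) k)) := by
      cases hnc : n with
      | zero => rw [hrE0, map_zero]; simp
      | succ n' =>
        rw [hrE, hψE]
        apply Finset.sum_congr rfl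
        intro m hm
        rw [Nat.succ_sub_succ]
    rw [hrψ, hψr, add_sub_cancel_right]
  · have h1 : ψ ↑x = s (φ ↑x) := by rw [hψ_apply, hψv]; simp only [dif_neg hx]
    have h2 : r ↑x = (0 : V) := by rw [hr_apply, hrv]; simp only [dif_neg hx]
    rw [h1, h2, map_zero, sub_zero, hrs _ (hspanT ⟨↑x, rfl⟩)]

theorem rank_sub_le' (f g : Module.End F V) :
    LinearMap.rank (f - g) ≤ LinearMap.rank f + LinearMap.rank g := by
  have hle : LinearMap.range (f - g) ≤ LinearMap.range f ⊔ LinearMap.range g := by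
    rintro z ⟨x, rfl⟩
    rw [LinearMap.sub_apply]
    exact Submodule.sub_mem _ (Submodule.mem_sup_left ⟨x, rfl⟩) (Submodule.mem_sup_right ⟨x, rfl⟩)
  exact le_trans (Submodule.rank_mono hle) (Submodule.rank_add_le_rank_add_rank _ _)

theorem rank_smul_le' (c : F) (f : Module.End F V) :
    LinearMap.rank (c • f) ≤ LinearMap.rank f := by
  have h1 : LinearMap.range (c • f) ≤ LinearMap.range f := by
    rintro x ⟨y, rfl⟩
    exact ⟨c • y, by simp⟩
  exact Submodule.rank_mono h1

/-- decomposition of a finite-rank map into rank-≤-1 maps -/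
theorem finite_rank_decomp (φ : Module.End F V) (h : LinearMap.rank φ < ℵ₀) :
    ∃ (nn : ℕ) (g : Fin nn → Module.End F V),
      (∀ j, LinearMap.rank (g j) ≤ 1) ∧ φ = ∑ j, g j := by
  classical
  have : Module.Finite F ↥(LinearMap.range φ) := Module.rank_lt_aleph0_iff.mp h
  let B := Module.finBasis F ↥(LinearMap.range φ)
  refine ⟨Module.finrank F ↥(LinearMap.range φ),
    fun j => ((B.coord j).comp φ.rangeRestrict).smulRight ((B j : LinearMap.range φ) : V), ?_, ?_⟩
  · intro j
    have hle : LinearMap.range (((B.coord j).comp φ.rangeRestrict).smulRight ((B j : LinearMap.range φ) : V))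
        ≤ Submodule.span F {((B j : LinearMap.range φ) : V)} := by
      rintro z ⟨x, rfl⟩
      exact Submodule.mem_span_singleton.mpr ⟨_, rfl⟩
    refine le_trans (Submodule.rank_mono hle) ?_
    simpa using rank_span_le (R := F) ({((B j : LinearMap.range φ) : V)} : Set V)
  · ext v
    have hrepr := B.sum_repr (φ.rangeRestrict v)
    have := congrArg (Subtype.val : ↥(LinearMap.range φ) → V) hrepr
    push_cast at this
    rw [LinearMap.sum_apply]
    simp only [LinearMap.smulRight_apply, LinearMap.comp_apply, Module.Basis.coord_apply]
    rw [this]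
    rfl

theorem bracket_mem_of_factor (U : Submodule F (Module.End F V))
    (hU : ∀ u ∈ U, ∀ a : Module.End F V, u * a - a * u ∈ U) {u v φ : Module.End F V}
    (hu : u ∈ U) (hv : v ∈ U)
    (h : LinearMap.rank φ ≤ LinearMap.rank (u * v - v * u)) :
    ∀ ψ : Module.End F V, φ * ψ - ψ * φ ∈ U := by
  obtain ⟨b, c, rfl⟩ := exists_factor h
  intro ψ
  exact key_bracket U hU hu hv b c ψ

theorem exists_big_double_bracket (h2 : (2:F) ≠ 0) (hV : ℵ₀ ≤ Module.rank F V)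
    {α : Cardinal} (hα : ℵ₀ ≤ α) (hαV : α ≤ Module.rank F V) {u : Module.End F V}
    (hu : ∀ c : F, ¬ (LinearMap.rank (u - c • 1) < α)) :
    ∃ a : Module.End F V,
      α ≤ LinearMap.rank (u * (u*a - a*u) - (u*a - a*u) * u) := by
  by_contra hcon
  push_neg at hcon
  have hprod : ∀ a b : Module.End F V,
      LinearMap.rank ((u*a - a*u) * (u*b - b*u)) < α := by
    intro a b
    have h2s : (2:F) • ((u*a - a*u) * (u*b - b*u)) =
        (u * (u*(a*b) - (a*b)*u) - (u*(a*b) - (a*b)*u) * u)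
         - (u*(u*a - a*u) - (u*a - a*u)*u) * b
         - a * (u*(u*b - b*u) - (u*b - b*u)*u) := by
      rw [two_smul]; noncomm_ring
    have hid : (u*a - a*u) * (u*b - b*u) = (2:F)⁻¹ •
        ((u * (u*(a*b) - (a*b)*u) - (u*(a*b) - (a*b)*u) * u)
         - (u*(u*a - a*u) - (u*a - a*u)*u) * b
         - a * (u*(u*b - b*u) - (u*b - b*u)*u)) := by
      rw [← h2s, smul_smul, inv_mul_cancel₀ h2, one_smul]
    rw [hid]
    refine lt_of_le_of_lt (rank_smul_le' _ _) ?_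
    refine lt_of_le_of_lt (rank_sub_le' _ _) (Cardinal.add_lt_of_lt hα ?_ ?_)
    · refine lt_of_le_of_lt (rank_sub_le' _ _) (Cardinal.add_lt_of_lt hα (hcon (a*b)) ?_)
      exact lt_of_le_of_lt (LinearMap.rank_comp_le_left b _) (hcon a)
    · exact lt_of_le_of_lt (LinearMap.rank_comp_le_right _ a) (hcon b)
  have hmid : ∀ a b c : Module.End F V,
      LinearMap.rank ((u*a - a*u) * c * (u*b - b*u)) < α := by
    intro a b c
    have hid2 : (u*a - a*u) * c * (u*b - b*u)
        = (u*a - a*u) * (u*(c*b) - (c*b)*u) - ((u*a - a*u) * (u*c - c*u)) * b := by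
      noncomm_ring
    rw [hid2]
    refine lt_of_le_of_lt (rank_sub_le' _ _) (Cardinal.add_lt_of_lt hα (hprod a (c*b)) ?_)
    exact lt_of_le_of_lt (LinearMap.rank_comp_le_left b _) (hprod a c)
  obtain ⟨a₀, ha₀⟩ := exists_big_bracket hV hα hαV hu
  obtain ⟨c, hc⟩ := exists_rank_comp (u*a₀ - a₀*u) (u*a₀ - a₀*u) ha₀ ha₀
  exact absurd hc (not_le.mpr (hmid a₀ a₀ c))

end Helpers

variable (F V : Type*) [Field F] [AddCommGroup V] [Module F V]

/-- The ideal `I_α` of endomorphisms of rank `< α` (for an infinite cardinal `α`),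
as a subspace of `End F V`. -/
def rankIdeal (α : Cardinal) (hα : ℵ₀ ≤ α) : Submodule F (Module.End F V) where
  carrier := {φ | LinearMap.rank φ < α}
  zero_mem' := by
    simp only [Set.mem_setOf_eq, LinearMap.rank_zero]
    exact lt_of_lt_of_le aleph0_pos hα
  add_mem' := fun hf hg =>
    lt_of_le_of_lt (LinearMap.rank_add_le _ _) (Cardinal.add_lt_of_lt hα hf hg)
  smul_mem' := by
    intro c f hf
    have h1 : LinearMap.range (c • f) ≤ LinearMap.range f := by
      rintro x ⟨y, rfl⟩
      exact ⟨c • y, by simp⟩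
    exact lt_of_le_of_lt (Submodule.rank_mono h1) hf

theorem mem_rankIdeal' {α : Cardinal} {hα : ℵ₀ ≤ α} {φ : Module.End F V} :
    φ ∈ rankIdeal F V α hα ↔ LinearMap.rank φ < α := Iff.rfl

theorem mem_span_one_sup_rankIdeal {α : Cardinal} (hα : ℵ₀ ≤ α) (x : Module.End F V) :
    x ∈ Submodule.span F {(1 : Module.End F V)} ⊔ rankIdeal F V α hα ↔
      ∃ c : F, LinearMap.rank (x - c • 1) < α := by
  constructor
  · intro hm
    obtain ⟨y, hy, z, hz, rfl⟩ := Submodule.mem_sup.mp hm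
    obtain ⟨c, rfl⟩ := Submodule.mem_span_singleton.mp hy
    refine ⟨c, ?_⟩
    have heq : c • (1 : Module.End F V) + z - c • 1 = z := by abel
    rw [heq]
    exact (mem_rankIdeal' F V).mp hz
  · rintro ⟨c, hc⟩
    exact Submodule.mem_sup.mpr ⟨c • 1,
      Submodule.smul_mem _ _ (Submodule.mem_span_singleton_self _),
      x - c • 1, (mem_rankIdeal' F V).mpr hc, by abel⟩

/-- Classification of the ideals of the Lie algebra `gl(V)` for an infinite-dimensional space
`V` over a field of characteristic `≠ 2`. -/
theorem lie_ideals_of_gl_classification (h2 : (2 : F) ≠ 0) (hV : ℵ₀ ≤ Module.rank F V)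
    (U : Submodule F (Module.End F V))
    (hU : ∀ u ∈ U, ∀ a : Module.End F V, u * a - a * u ∈ U) :
    U = ⊥ ∨ U = Submodule.span F {(1 : Module.End F V)} ∨ U = ⊤ ∨
      (∃ α : Cardinal, ∃ hα : ℵ₀ ≤ α, α ≤ Module.rank F V ∧
        (U = rankIdeal F V α hα ∨
          U = Submodule.span F {(1 : Module.End F V)} ⊔ rankIdeal F V α hα)) ∨
      (Submodule.span F {x : Module.End F V | ∃ φ ψ : Module.End F V,
          LinearMap.rank φ < ℵ₀ ∧ x = φ * ψ - ψ * φ} ≤ U ∧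
        U ≤ Submodule.span F {(1 : Module.End F V)} ⊔ rankIdeal F V ℵ₀ le_rfl) := by
  classical
  by_cases hab : ∀ p ∈ U, ∀ q ∈ U, p * q = q * p
  · -- abelian case: U ≤ F·1
    have hle : U ≤ Submodule.span F {(1 : Module.End F V)} := by
      intro u hu
      apply central_is_scalar hV
      intro a
      have hdd : ∀ b : Module.End F V, u * (u*b - b*u) - (u*b - b*u) * u = 0 :=
        fun b => sub_eq_zero_of_eq (hab u hu _ (hU u hu b))
      have hprod : ∀ a' b' : Module.End F V, (u*a' - a'*u) * (u*b' - b'*u) = 0 := by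
        intro a' b'
        have h2s : (2:F) • ((u*a' - a'*u) * (u*b' - b'*u)) =
            (u * (u*(a'*b') - (a'*b')*u) - (u*(a'*b') - (a'*b')*u) * u)
            - (u*(u*a' - a'*u) - (u*a' - a'*u)*u) * b'
            - a' * (u*(u*b' - b'*u) - (u*b' - b'*u)*u) := by
          rw [two_smul]; noncomm_ring
        rw [hdd, hdd, hdd, zero_mul, mul_zero, sub_zero, sub_zero] at h2s
        have := congrArg (fun z => (2:F)⁻¹ • z) h2s
        simpa [smul_smul, inv_mul_cancel₀ h2] using this
      have hmid : ∀ a' b' c : Module.End F V, (u*a' - a'*u) * c * (u*b' - b'*u) = 0 := by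
        intro a' b' c
        have hkey : (u*a' - a'*u) * c * (u*b' - b'*u)
            = (u*a' - a'*u) * (u*(c*b') - (c*b')*u)
              - ((u*a' - a'*u) * (u*c - c*u)) * b' := by
          noncomm_ring
        rw [hkey, hprod, hprod, zero_mul, sub_zero]
      by_contra hxne
      have hrank1 : (1:Cardinal) ≤ LinearMap.rank (u*a - a*u) :=
        Cardinal.one_le_iff_ne_zero.mpr
          (by simp [LinearMap.rank, Submodule.rank_eq_zero, LinearMap.range_eq_bot, hxne])
      obtain ⟨c, hc⟩ := exists_rank_comp (u*a - a*u) (u*a - a*u) hrank1 hrank1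
      rw [hmid a a c, LinearMap.rank_zero] at hc
      exact absurd hc (by simp)
    by_cases hbot : U = ⊥
    · exact Or.inl hbot
    · refine Or.inr (Or.inl ?_)
      obtain ⟨u, huU, hune⟩ : ∃ u ∈ U, u ≠ 0 := by
        by_contra hcon
        push_neg at hcon
        exact hbot ((Submodule.eq_bot_iff U).mpr hcon)
      have h1U : (1 : Module.End F V) ∈ U := by
        obtain ⟨c, hc⟩ := Submodule.mem_span_singleton.mp (hle huU)
        have hcne : c ≠ 0 := by rintro rfl; rw [zero_smul] at hc; exact hune hc.symm
        have h1eq : (1 : Module.End F V) = c⁻¹ • u := by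
          rw [← hc, smul_smul, inv_mul_cancel₀ hcne, one_smul]
        rw [h1eq]; exact U.smul_mem _ huU
      refine le_antisymm hle (Submodule.span_le.mpr ?_)
      intro z hz
      rw [Set.mem_singleton_iff] at hz
      rw [hz]; exact h1U
  · -- non-abelian case
    push_neg at hab
    obtain ⟨p, hp, q, hq, hne⟩ := hab
    have hwne : p * q - q * p ≠ 0 := sub_ne_zero.mpr hne
    have hwrank1 : (1:Cardinal) ≤ LinearMap.rank (p*q - q*p) :=
      Cardinal.one_le_iff_ne_zero.mpr
        (by simp [LinearMap.rank, Submodule.rank_eq_zero, LinearMap.range_eq_bot, hwne])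
    -- lower bound: finite-rank brackets are in U
    have hfin : ∀ φ ψ : Module.End F V, LinearMap.rank φ < ℵ₀ → φ * ψ - ψ * φ ∈ U := by
      intro φ ψ hφ
      obtain ⟨nn, g, hg1, hgsum⟩ := finite_rank_decomp φ hφ
      have hsum : φ * ψ - ψ * φ = ∑ j, (g j * ψ - ψ * g j) := by
        rw [hgsum, Finset.sum_mul, Finset.mul_sum, ← Finset.sum_sub_distrib]
      rw [hsum]
      exact Submodule.sum_mem _ fun j _ =>
        bracket_mem_of_factor U hU hp hq (le_trans (hg1 j) hwrank1) ψ
    have hlow : Submodule.span F {x : Module.End F V | ∃ φ ψ : Module.End F V,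
        LinearMap.rank φ < ℵ₀ ∧ x = φ * ψ - ψ * φ} ≤ U := by
      rw [Submodule.span_le]
      rintro x ⟨φ, ψ, hφ, rfl⟩
      exact hfin φ ψ hφ
    -- main engine
    have hbig : ∀ β : Cardinal, ℵ₀ ≤ β → β ≤ Module.rank F V →
        (¬ ∀ u ∈ U, ∃ c : F, LinearMap.rank (u - c • 1) < β) →
        ∀ φ : Module.End F V, LinearMap.rank φ ≤ β →
          ∀ ψ : Module.End F V, φ * ψ - ψ * φ ∈ U := by
      intro β hβ hβδ hnot
      push_neg at hnot
      obtain ⟨u, hu, hranks⟩ := hnot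
      have hranks' : ∀ c : F, ¬ (LinearMap.rank (u - c • 1) < β) :=
        fun c => not_lt.mpr (hranks c)
      obtain ⟨a, ha⟩ := exists_big_double_bracket h2 hV hβ hβδ hranks'
      intro φ hφ ψ
      exact bracket_mem_of_factor U hU hu (hU u hu a) (le_trans hφ ha) ψ
    by_cases hT : ∀ u ∈ U, ∃ c : F, LinearMap.rank (u - c • 1) < Module.rank F V
    · -- the set of bounds is nonempty
      set Tset : Set Cardinal :=
        {β | ℵ₀ ≤ β ∧ β ≤ Module.rank F V ∧ ∀ u ∈ U, ∃ c : F, LinearMap.rank (u - c • 1) < β}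
        with hTset
      have hTne : Tset.Nonempty := ⟨Module.rank F V, hV, le_rfl, hT⟩
      have hαmem := csInf_mem hTne
      obtain ⟨hα, hαδ, hup⟩ := hαmem
      by_cases hα0 : sInf Tset = ℵ₀
      · -- disjunct 5
        refine Or.inr (Or.inr (Or.inr (Or.inr ⟨hlow, ?_⟩)))
        intro u hu
        obtain ⟨c, hc⟩ := hup u hu
        rw [hα0] at hc
        exact (mem_span_one_sup_rankIdeal F V le_rfl u).mpr ⟨c, hc⟩
      · -- disjunct 4
        refine Or.inr (Or.inr (Or.inr (Or.inl ⟨sInf Tset, hα, hαδ, ?_⟩)))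
        have hαgt : ℵ₀ < sInf Tset := lt_of_le_of_ne hα (Ne.symm hα0)
        have hIα : rankIdeal F V (sInf Tset) hα ≤ U := by
          intro φ hφ
          rw [mem_rankIdeal' F V] at hφ
          have hγ'1 : ℵ₀ ≤ max (LinearMap.rank φ) ℵ₀ := le_max_right _ _
          have hγ'α : max (LinearMap.rank φ) ℵ₀ < sInf Tset := max_lt hφ hαgt
          have hγ'δ : max (LinearMap.rank φ) ℵ₀ ≤ Module.rank F V :=
            le_trans hγ'α.le hαδ
          have hβnot : ¬ ∀ u ∈ U, ∃ c : F,
              LinearMap.rank (u - c • 1) < max (LinearMap.rank φ) ℵ₀ := by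
            intro hcon
            have hmem : max (LinearMap.rank φ) ℵ₀ ∈ Tset := ⟨hγ'1, hγ'δ, hcon⟩
            exact absurd (csInf_le (OrderBot.bddBelow _) hmem) (not_le.mpr hγ'α)
          have hbr := hbig _ hγ'1 hγ'δ hβnot
          obtain ⟨r, ψ, hr, hrepr⟩ :=
            exists_commutator_repr hV hγ'1 hγ'δ φ (le_max_left _ _)
          rw [hrepr]
          exact hbr r hr ψ
        by_cases h1U : U ≤ rankIdeal F V (sInf Tset) hα
        · exact Or.inl (le_antisymm h1U hIα)
        · refine Or.inr ?_
          rw [SetLike.not_le_iff_exists] at h1U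
          obtain ⟨u, hu, hnotI⟩ := h1U
          obtain ⟨c, hc⟩ := hup u hu
          have hcne : c ≠ 0 := by
            rintro rfl
            apply hnotI
            rw [mem_rankIdeal' F V]
            simpa using hc
          have h1mem : (1 : Module.End F V) ∈ U := by
            have hsub : u - (u - c • 1) ∈ U :=
              Submodule.sub_mem _ hu (hIα ((mem_rankIdeal' F V).mpr hc))
            have heq : (1 : Module.End F V) = c⁻¹ • (u - (u - c • 1)) := by
              rw [sub_sub_cancel, smul_smul, inv_mul_cancel₀ hcne, one_smul]
            rw [heq]
            exact U.smul_mem _ hsub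
          refine le_antisymm ?_ (sup_le ?_ hIα)
          · intro x hx
            obtain ⟨cx, hcx⟩ := hup x hx
            exact (mem_span_one_sup_rankIdeal F V hα x).mpr ⟨cx, hcx⟩
          · rw [Submodule.span_le]
            intro z hz
            rw [Set.mem_singleton_iff] at hz
            rw [hz]; exact h1mem
    · -- U = ⊤
      refine Or.inr (Or.inr (Or.inl ?_))
      have hall := hbig (Module.rank F V) hV le_rfl hT
      rw [Submodule.eq_top_iff']
      intro e
      obtain ⟨r, ψ, hr, hrepr⟩ :=
        exists_commutator_repr hV hV le_rfl e (LinearMap.rank_le_domain e)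
      rw [hrepr]
      exact hall r hr ψ
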